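/- For any real numbers x > 0 and s > 0, and any integer k ≥ 1, the sum of n^{-s} over positive integers n with exactly k prime factors counted with multiplicity (Ω(n) = k) and largest prime factor at most x equals the sum, over all partitions (n₁, n₂, …) of k (i.e., n₁ + 2n₂ + 3n₃ + ⋯ = k), of the product over j ≥ 1 of (Z(js,x)/j)^{n_j} / n_j!, where Z(t,x) = ∑_{p ≤ x, p prime} p^{-t}. -/

import Mathlib

open Filter Real Asymptotics
open scoped Classical Topology BigOperators

/-- The finite set of primes `p ≤ x`, for a real number `x`. -/
noncomputable def primesUpTo (x : ℝ) : Finset ℕ :=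
  (Finset.range (⌊x⌋₊ + 1)).filter Nat.Prime

/-- `n` is `x`-smooth: `n` is a positive integer all of whose prime factors are `≤ x`
(equivalently, `P⁺(n) ≤ x`). -/
def IsSmooth (x : ℝ) (n : ℕ) : Prop := 0 < n ∧ ∀ p ∈ n.primeFactors, (p : ℝ) ≤ x

/-- `Ω n`: number of prime factors of `n` counted with multiplicity. -/
def bigOmega (n : ℕ) : ℕ := n.primeFactorsList.length

/-- Truncated prime zeta function `Z(t, x) = ∑_{p ≤ x} p^{-t}`. -/
noncomputable def Ztr (t x : ℝ) : ℝ := ∑ p ∈ primesUpTo x, (p : ℝ) ^ (-t)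

/-- Prime zeta function `Z(j) = ∑_p p^{-j}`. -/
noncomputable def Zp (j : ℕ) : ℝ := ∑' p : Nat.Primes, (1 : ℝ) / ((p : ℕ) : ℝ) ^ j

namespace SmoothAux

/-- weight function -/
noncomputable def w (s : ℝ) (p : ℕ) : ℝ := (p : ℝ) ^ (-s)

/-- multisets of size `k` with entries primes `≤ x` -/
noncomputable def MS (x : ℝ) (k : ℕ) : Finset (Multiset ℕ) :=
  ((primesUpTo x).sym k).map ⟨Sym.toMultiset, Sym.coe_injective⟩

lemma mem_MS {x : ℝ} {k : ℕ} {m : Multiset ℕ} :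
    m ∈ MS x k ↔ Multiset.card m = k ∧ ∀ a ∈ m, a ∈ primesUpTo x := by
  simp only [MS, Finset.mem_map, Function.Embedding.coeFn_mk]
  constructor
  · rintro ⟨y, hy, rfl⟩
    exact ⟨y.2, fun a ha => (Finset.mem_sym_iff.1 hy) a ha⟩
  · rintro ⟨h1, h2⟩
    exact ⟨⟨m, h1⟩, Finset.mem_sym_iff.2 h2, rfl⟩

/-- truncated harmonic-type sum over multisets -/
noncomputable def hfun (x s : ℝ) (k : ℕ) : ℝ := ∑ m ∈ MS x k, (m.map (w s)).prod

/-- power sums -/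
noncomputable def Pf (x s : ℝ) (j : ℕ) : ℝ := ∑ p ∈ primesUpTo x, w s p ^ j

noncomputable def g (x s : ℝ) (j c : ℕ) : ℝ :=
  (Pf x s j / (j : ℝ)) ^ c / (Nat.factorial c : ℝ)

noncomputable def T (x s : ℝ) (k : ℕ) : ℝ :=
  ∑ P : Nat.Partition k, ∏ j ∈ P.parts.toFinset, g x s j (P.parts.count j)

lemma hfun_rec (x s : ℝ) (k : ℕ) :
    (k : ℝ) * hfun x s k = ∑ j ∈ Finset.Icc 1 k, Pf x s j * hfun x s (k - j) := by
  have L : ∑ p ∈ (MS x k).sigma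
        (fun m => m.toFinset.sigma fun a => Finset.Icc 1 (m.count a)),
        ((p.1.map (w s)).prod) = (k : ℝ) * hfun x s k := by
    rw [Finset.sum_sigma, hfun, Finset.mul_sum]
    refine Finset.sum_congr rfl fun m hm => ?_
    rw [Finset.sum_sigma]
    have h1 : ∀ a ∈ m.toFinset,
        (∑ _j ∈ Finset.Icc 1 (m.count a), ((m.map (w s)).prod))
          = (m.count a : ℝ) * (m.map (w s)).prod := by
      intro a _
      rw [Finset.sum_const, Nat.card_Icc, nsmul_eq_mul]
      simp
    rw [Finset.sum_congr rfl h1, ← Finset.sum_mul, ← Nat.cast_sum,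
      Multiset.toFinset_sum_count_eq, (mem_MS.1 hm).1]
  have R : ∑ p ∈ (Finset.Icc 1 k).sigma (fun j => (primesUpTo x) ×ˢ MS x (k - j)),
        (w s p.2.1 ^ p.1 * ((p.2.2.map (w s)).prod))
      = ∑ j ∈ Finset.Icc 1 k, Pf x s j * hfun x s (k - j) := by
    rw [Finset.sum_sigma]
    refine Finset.sum_congr rfl fun j hj => ?_
    rw [Finset.sum_product, Pf, hfun, Finset.sum_mul_sum]
  rw [← L, ← R]
  refine Finset.sum_bij' (fun p hp => ⟨p.2.2, (p.2.1, p.1 - Multiset.replicate p.2.2 p.2.1)⟩)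
    (fun q hq => ⟨q.2.2 + Multiset.replicate q.1 q.2.1, q.2.1, q.1⟩) ?_ ?_ ?_ ?_ ?_
  · rintro ⟨m, a, j⟩ hp
    simp only [Finset.mem_sigma, Multiset.mem_toFinset, Finset.mem_Icc] at hp
    obtain ⟨hm, ha, hj1, hj2⟩ := hp
    have hrep : Multiset.replicate j a ≤ m := Multiset.le_count_iff_replicate_le.1 hj2
    obtain ⟨hcard, hmem⟩ := mem_MS.1 hm
    simp only [Finset.mem_sigma, Finset.mem_Icc, Finset.mem_product]
    refine ⟨⟨hj1, ?_⟩, hmem a ha, mem_MS.2 ⟨?_, ?_⟩⟩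
    · exact le_trans hj2 (le_trans (Multiset.count_le_card a m) hcard.le)
    · rw [Multiset.card_sub hrep, Multiset.card_replicate, hcard]
    · exact fun b hb => hmem b (Multiset.mem_of_le tsub_le_self hb)
  · rintro ⟨j, a, m'⟩ hq
    simp only [Finset.mem_sigma, Finset.mem_Icc, Finset.mem_product] at hq
    obtain ⟨⟨hj1, hj2⟩, ha, hm'⟩ := hq
    obtain ⟨hcard, hmem⟩ := mem_MS.1 hm'
    simp only [Finset.mem_sigma, Multiset.mem_toFinset, Finset.mem_Icc]
    refine ⟨mem_MS.2 ⟨?_, ?_⟩, ?_, hj1, ?_⟩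
    · rw [Multiset.card_add, Multiset.card_replicate, hcard]
      omega
    · intro b hb
      rcases Multiset.mem_add.1 hb with hb | hb
      · exact hmem b hb
      · rwa [Multiset.eq_of_mem_replicate hb]
    · exact Multiset.mem_add.2 (Or.inr (Multiset.mem_replicate.2 ⟨by omega, rfl⟩))
    · rw [Multiset.count_add, Multiset.count_replicate_self]
      omega
  · rintro ⟨m, a, j⟩ hp
    simp only [Finset.mem_sigma, Multiset.mem_toFinset, Finset.mem_Icc] at hp
    obtain ⟨hm, ha, hj1, hj2⟩ := hp
    have hrep : Multiset.replicate j a ≤ m := Multiset.le_count_iff_replicate_le.1 hj2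
    dsimp only
    rw [tsub_add_cancel_of_le hrep]
  · rintro ⟨j, a, m'⟩ hq
    dsimp only
    rw [add_tsub_cancel_right]
  · rintro ⟨m, a, j⟩ hp
    simp only [Finset.mem_sigma, Multiset.mem_toFinset, Finset.mem_Icc] at hp
    obtain ⟨hm, ha, hj1, hj2⟩ := hp
    have hrep : Multiset.replicate j a ≤ m := Multiset.le_count_iff_replicate_le.1 hj2
    dsimp only
    conv_lhs => rw [← tsub_add_cancel_of_le hrep]
    rw [Multiset.map_add, Multiset.prod_add, Multiset.map_replicate,
      Multiset.prod_replicate, mul_comm]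

lemma g_zero (x s : ℝ) (j : ℕ) : g x s j 0 = 1 := by
  simp [g]

lemma g_step (x s : ℝ) {j c : ℕ} (hj : 0 < j) (hc : 0 < c) :
    (j : ℝ) * (c : ℝ) * g x s j c = Pf x s j * g x s j (c - 1) := by
  obtain ⟨d, rfl⟩ : ∃ d, c = d + 1 := ⟨c - 1, (Nat.succ_pred_eq_of_pos hc).symm⟩
  simp only [g, Nat.add_sub_cancel, pow_succ, Nat.factorial_succ, Nat.cast_mul,
    Nat.cast_add, Nat.cast_one]
  have hj' : (j : ℝ) ≠ 0 := Nat.cast_ne_zero.2 hj.ne'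
  have hd : ((Nat.factorial d : ℕ) : ℝ) ≠ 0 := Nat.cast_ne_zero.2 d.factorial_ne_zero
  field_simp

lemma T_rec (x s : ℝ) (k : ℕ) :
    (k : ℝ) * T x s k = ∑ j ∈ Finset.Icc 1 k, Pf x s j * T x s (k - j) := by
  have L : ∑ p ∈ (Finset.univ : Finset (Nat.Partition k)).sigma (fun P => P.parts.toFinset),
        ((p.2 : ℝ) * (p.1.parts.count p.2 : ℝ)
          * ∏ i ∈ p.1.parts.toFinset, g x s i (p.1.parts.count i))
      = (k : ℝ) * T x s k := by
    rw [Finset.sum_sigma, T, Finset.mul_sum]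
    refine Finset.sum_congr rfl fun P _ => ?_
    dsimp only
    rw [← Finset.sum_mul]
    congr 1
    calc ∑ i ∈ P.parts.toFinset, (i : ℝ) * (P.parts.count i : ℝ)
        = ∑ i ∈ P.parts.toFinset, P.parts.count i • (i : ℝ) := by
          refine Finset.sum_congr rfl fun i _ => ?_
          rw [nsmul_eq_mul, mul_comm]
      _ = (Multiset.map (Nat.cast : ℕ → ℝ) P.parts).sum := (Finset.sum_multiset_map_count _ _).symm
      _ = (k : ℝ) := by rw [← Nat.cast_multiset_sum, P.parts_sum]
  have R : ∑ p ∈ (Finset.Icc 1 k).sigma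
        (fun j => (Finset.univ : Finset (Nat.Partition (k - j)))),
        (Pf x s p.1 * ∏ i ∈ p.2.parts.toFinset, g x s i (p.2.parts.count i))
      = ∑ j ∈ Finset.Icc 1 k, Pf x s j * T x s (k - j) := by
    rw [Finset.sum_sigma]
    exact Finset.sum_congr rfl fun j _ => by rw [T, Finset.mul_sum]
  rw [← L, ← R]
  refine Finset.sum_bij' (fun p hp => ⟨p.2, ⟨p.1.parts.erase p.2,
      fun hi => p.1.parts_pos (Multiset.mem_of_mem_erase hi), by
        have hp' := Finset.mem_sigma.1 hp
        have hmem : p.2 ∈ p.1.parts := Multiset.mem_toFinset.1 hp'.2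
        have h := p.1.parts_sum
        rw [← Multiset.cons_erase hmem, Multiset.sum_cons] at h
        omega⟩⟩)
    (fun q hq => ⟨⟨q.1 ::ₘ q.2.parts,
      fun hi => by
        rcases Multiset.mem_cons.1 hi with h | h
        · subst h
          have := (Finset.mem_Icc.1 (Finset.mem_sigma.1 hq).1).1
          omega
        · exact q.2.parts_pos h, by
        rw [Multiset.sum_cons, q.2.parts_sum]
        have := (Finset.mem_Icc.1 (Finset.mem_sigma.1 hq).1).2
        omega⟩, q.1⟩) ?_ ?_ ?_ ?_ ?_
  · rintro ⟨P, j⟩ hp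
    simp only [Finset.mem_sigma, Multiset.mem_toFinset] at hp
    have hj : j ∈ P.parts := hp.2
    simp only [Finset.mem_sigma, Finset.mem_Icc, Finset.mem_univ, and_true]
    constructor
    · exact P.parts_pos hj
    · have h2 : j ≤ P.parts.sum := Multiset.single_le_sum (fun y _ => Nat.zero_le y) j hj
      rw [P.parts_sum] at h2
      exact h2
  · rintro ⟨j, Q⟩ hq
    simp only [Finset.mem_sigma, Finset.mem_univ, Multiset.mem_toFinset, true_and]
    exact Multiset.mem_cons_self _ _
  · rintro ⟨P, j⟩ hp
    simp only [Finset.mem_sigma, Multiset.mem_toFinset] at hp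
    have hj : j ∈ P.parts := hp.2
    dsimp only
    simp only [Sigma.mk.inj_iff]
    exact ⟨Nat.Partition.ext (Multiset.cons_erase hj), HEq.rfl⟩
  · rintro ⟨j, Q⟩ hq
    dsimp only
    simp only [Sigma.mk.inj_iff, true_and]
    exact heq_of_eq (Nat.Partition.ext (Multiset.erase_cons_head _ _))
  · rintro ⟨P, j⟩ hp
    simp only [Finset.mem_sigma, Multiset.mem_toFinset] at hp
    have hj : j ∈ P.parts := hp.2
    have hmem : j ∈ P.parts.toFinset := Multiset.mem_toFinset.2 hj
    have hc : 0 < P.parts.count j := Multiset.count_pos.2 hj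
    have hjpos : 0 < j := P.parts_pos hj
    dsimp only
    have e1 : ∏ i ∈ (P.parts.erase j).toFinset, g x s i ((P.parts.erase j).count i)
        = ∏ i ∈ P.parts.toFinset, g x s i ((P.parts.erase j).count i) := by
      apply Finset.prod_subset
      · intro i hi
        exact Multiset.mem_toFinset.2 (Multiset.mem_of_mem_erase (Multiset.mem_toFinset.1 hi))
      · intro i _ hi
        have hz : (P.parts.erase j).count i = 0 :=
          Multiset.count_eq_zero.2 (fun hmem' => hi (Multiset.mem_toFinset.2 hmem'))
        rw [hz, g_zero]
    have e2 : ∏ i ∈ P.parts.toFinset, g x s i ((P.parts.erase j).count i)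
        = g x s j (P.parts.count j - 1)
          * ∏ i ∈ P.parts.toFinset.erase j, g x s i (P.parts.count i) := by
      rw [← Finset.mul_prod_erase _ _ hmem]
      congr 1
      · rw [Multiset.count_erase_self]
      · refine Finset.prod_congr rfl fun i hi => ?_
        rw [Multiset.count_erase_of_ne (Finset.ne_of_mem_erase hi)]
    have e3 : ∏ i ∈ P.parts.toFinset, g x s i (P.parts.count i)
        = g x s j (P.parts.count j)
          * ∏ i ∈ P.parts.toFinset.erase j, g x s i (P.parts.count i) :=
      (Finset.mul_prod_erase _ _ hmem).symm
    calc (j : ℝ) * (P.parts.count j : ℝ) * ∏ i ∈ P.parts.toFinset, g x s i (P.parts.count i)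
        = ((j : ℝ) * (P.parts.count j : ℝ) * g x s j (P.parts.count j))
          * ∏ i ∈ P.parts.toFinset.erase j, g x s i (P.parts.count i) := by rw [e3]; ring
      _ = (Pf x s j * g x s j (P.parts.count j - 1))
          * ∏ i ∈ P.parts.toFinset.erase j, g x s i (P.parts.count i) := by
            rw [g_step x s hjpos hc]
      _ = Pf x s j * ∏ i ∈ (P.parts.erase j).toFinset, g x s i ((P.parts.erase j).count i) := by
            rw [e1, e2]; ring

lemma hfun_zero (x s : ℝ) : hfun x s 0 = 1 := by
  have : MS x 0 = {0} := by
    ext m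
    simp [mem_MS, Multiset.card_eq_zero]
    rintro rfl a ha
    simp at ha
  simp [hfun, this]

lemma T_zero (x s : ℝ) : T x s 0 = 1 := by
  have hP : ∀ P : Nat.Partition 0, P.parts = 0 := by
    intro P
    rw [Multiset.eq_zero_iff_forall_notMem]
    intro a ha
    have h1 : 0 < a := P.parts_pos ha
    have h2 : a ≤ P.parts.sum := Multiset.single_le_sum (fun x _ => Nat.zero_le x) a ha
    rw [P.parts_sum] at h2
    omega
  rw [T]
  have h1 : ∀ P : Nat.Partition 0,
      ∏ j ∈ P.parts.toFinset, g x s j (P.parts.count j) = 1 := by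
    intro P; rw [hP P]; simp
  rw [Finset.sum_congr rfl fun P _ => h1 P]
  simp

lemma hfun_eq_T (x s : ℝ) : ∀ k, hfun x s k = T x s k := by
  intro k
  induction k using Nat.strong_induction_on with
  | _ k ih =>
    match k with
    | 0 => rw [hfun_zero, T_zero]
    | (n + 1) =>
      have hk : ((n + 1 : ℕ) : ℝ) ≠ 0 := Nat.cast_ne_zero.2 (Nat.succ_ne_zero n)
      apply mul_left_cancel₀ hk
      rw [hfun_rec, T_rec]
      refine Finset.sum_congr rfl fun j hj => ?_
      have hj1 : 1 ≤ j := (Finset.mem_Icc.1 hj).1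
      rw [ih (n + 1 - j) (by omega)]

lemma coe_primeFactorsList_prod (m : Multiset ℕ) (hm : ∀ p ∈ m, p.Prime) :
    (↑(Nat.primeFactorsList m.prod) : Multiset ℕ) = m := by
  revert hm
  refine Quotient.inductionOn m ?_
  intro l hm
  have h : List.Perm l (Nat.primeFactorsList l.prod) :=
    Nat.primeFactorsList_unique rfl (fun p hp => hm p (by simpa using hp))
  have hp : Multiset.prod (↑l : Multiset ℕ) = l.prod := Multiset.prod_coe l
  rw [show Quotient.mk _ l = (↑l : Multiset ℕ) from rfl, hp]
  exact Multiset.coe_eq_coe.2 h.symm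

lemma rpow_multiset_prod (m : Multiset ℕ) (s : ℝ) :
    ((m.prod : ℕ) : ℝ) ^ (-s) = (m.map (w s)).prod := by
  induction m using Multiset.induction_on with
  | empty => simp [Real.one_rpow]
  | cons a t ih =>
    rw [Multiset.prod_cons, Nat.cast_mul,
      Real.mul_rpow (by positivity) (by positivity),
      Multiset.map_cons, Multiset.prod_cons, ih, w]

lemma mem_primesUpTo {x : ℝ} {p : ℕ} :
    p ∈ primesUpTo x ↔ p ≤ ⌊x⌋₊ ∧ p.Prime := by
  simp [primesUpTo, Finset.mem_filter, Finset.mem_range, Nat.lt_add_one_iff]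

lemma tsum_eq_hfun (x s : ℝ) (hx : 0 < x) (k : ℕ) :
    (∑' n : ℕ, if IsSmooth x n ∧ bigOmega n = k then ((n : ℝ)) ^ (-s) else 0)
      = hfun x s k := by
  have key : ∀ n : ℕ, IsSmooth x n ∧ bigOmega n = k → n ∈ Finset.range (⌊x⌋₊ ^ k + 1) := by
    rintro n ⟨⟨hn0, hsm⟩, hΩ⟩
    rw [Finset.mem_range, Nat.lt_add_one_iff]
    calc n = n.primeFactorsList.prod := (Nat.prod_primeFactorsList hn0.ne').symm
      _ ≤ ⌊x⌋₊ ^ n.primeFactorsList.length := by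
          refine List.prod_le_pow_card _ _ ?_
          intro p hp
          exact Nat.le_floor (hsm p (List.mem_toFinset.2 hp))
      _ = ⌊x⌋₊ ^ k := by rw [show n.primeFactorsList.length = k from hΩ]
  rw [tsum_eq_sum (s := Finset.range (⌊x⌋₊ ^ k + 1))
    (fun b hb => if_neg (fun hc => hb (key b hc)))]
  rw [← Finset.sum_filter, hfun]
  refine Finset.sum_bij' (fun n _ => (↑n.primeFactorsList : Multiset ℕ))
    (fun m _ => m.prod) ?_ ?_ ?_ ?_ ?_
  · intro n hn
    obtain ⟨-, ⟨hn0, hsm⟩, hΩ⟩ := Finset.mem_filter.1 hn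
    refine mem_MS.2 ⟨by rwa [Multiset.coe_card], ?_⟩
    intro a ha
    rw [Multiset.mem_coe] at ha
    exact mem_primesUpTo.2 ⟨Nat.le_floor (hsm a (List.mem_toFinset.2 ha)),
      Nat.prime_of_mem_primeFactorsList ha⟩
  · intro m hm
    obtain ⟨hcard, hmem⟩ := mem_MS.1 hm
    have hp : ∀ a ∈ m, a.Prime := fun a ha => (mem_primesUpTo.1 (hmem a ha)).2
    have hfact := coe_primeFactorsList_prod m hp
    have hpos : 0 < m.prod :=
      CanonicallyOrderedAdd.multiset_prod_pos.2 (fun a ha => (hp a ha).pos)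
    refine Finset.mem_filter.2 ⟨?_, ⟨hpos, ?_⟩, ?_⟩
    · rw [Finset.mem_range, Nat.lt_add_one_iff]
      calc m.prod ≤ ⌊x⌋₊ ^ Multiset.card m :=
            Multiset.prod_le_pow_card m _ (fun a ha => (mem_primesUpTo.1 (hmem a ha)).1)
        _ = ⌊x⌋₊ ^ k := by rw [hcard]
    · intro p hp'
      have : p ∈ m := by
        have : p ∈ (↑(Nat.primeFactorsList m.prod) : Multiset ℕ) :=
          Multiset.mem_coe.2 (List.mem_toFinset.1 hp')
        rwa [hfact] at this
      have h1 : p ≤ ⌊x⌋₊ := (mem_primesUpTo.1 (hmem p this)).1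
      calc (p : ℝ) ≤ (⌊x⌋₊ : ℝ) := Nat.cast_le.2 h1
        _ ≤ x := Nat.floor_le hx.le
    · rw [bigOmega, ← Multiset.coe_card, hfact, hcard]
  · intro n hn
    obtain ⟨-, ⟨hn0, -⟩, -⟩ := Finset.mem_filter.1 hn
    rw [Multiset.prod_coe, Nat.prod_primeFactorsList hn0.ne']
  · intro m hm
    obtain ⟨-, hmem⟩ := mem_MS.1 hm
    exact coe_primeFactorsList_prod m (fun a ha => (mem_primesUpTo.1 (hmem a ha)).2)
  · intro n hn
    obtain ⟨-, ⟨hn0, -⟩, -⟩ := Finset.mem_filter.1 hn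
    conv_lhs => rw [show n = ((↑n.primeFactorsList : Multiset ℕ)).prod from
      by rw [Multiset.prod_coe, Nat.prod_primeFactorsList hn0.ne']]
    exact rpow_multiset_prod _ s

lemma Pf_eq_Ztr (x s : ℝ) (j : ℕ) : Pf x s j = Ztr ((j : ℝ) * s) x := by
  rw [Pf, Ztr]
  refine Finset.sum_congr rfl fun p _ => ?_
  rw [w, ← Real.rpow_natCast ((p : ℝ) ^ (-s)) j, ← Real.rpow_mul (Nat.cast_nonneg p)]
  congr 1
  ring

end SmoothAux

theorem smooth_kfold_sum_eq_partition_sum (x s : ℝ) (hx : 0 < x) (hs : 0 < s)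
    (k : ℕ) (hk : 1 ≤ k) :
    (∑' n : ℕ, if IsSmooth x n ∧ bigOmega n = k then ((n : ℝ)) ^ (-s) else 0)
      = ∑ P : Nat.Partition k, ∏ j ∈ P.parts.toFinset,
          (Ztr ((j : ℝ) * s) x / (j : ℝ)) ^ (P.parts.count j)
            / (Nat.factorial (P.parts.count j)) := by
  rw [SmoothAux.tsum_eq_hfun x s hx k, SmoothAux.hfun_eq_T, SmoothAux.T]
  refine Finset.sum_congr rfl fun P _ => Finset.prod_congr rfl fun j _ => ?_
  rw [SmoothAux.g, SmoothAux.Pf_eq_Ztr]
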